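/- arXiv:1501.02414 — 4 statements merged into one kernel-verified Lean document; each statement's English description precedes it below -/
import Mathlib

section
/- Let χ ∈ (0,1), γ ∈ [0,χ), A a real d×d matrix and {Ā_k} a sequence of real d×d matrices. If ‖n^{-χ} Σ_{k=1}^n (Ā_k − A)‖ → 0 as n → ∞, then ‖n^{-χ} Σ_{k=1}^n ((k+1)/k)^{γ} (Ā_k − A)‖ → 0 as n → ∞. -/
open Filter Finset
open scoped Topology

set_option maxHeartbeats 1000000 in
/-- Step 2 of the proof of Theorem 1 (matrix part): if
`‖n^{-χ} Σ_{k=1}^n (Ā_k − A)‖ → 0` then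
`‖n^{-χ} Σ_{k=1}^n ((k+1)/k)^γ (Ā_k − A)‖ → 0`. -/
theorem stmt_16 (d : ℕ) (hd : 0 < d) (χ γ : ℝ) (hχ : χ ∈ Set.Ioo (0 : ℝ) 1)
    (hγ : γ ∈ Set.Ico (0 : ℝ) χ)
    (A : EuclideanSpace ℝ (Fin d) →L[ℝ] EuclideanSpace ℝ (Fin d))
    (Ab : ℕ → EuclideanSpace ℝ (Fin d) →L[ℝ] EuclideanSpace ℝ (Fin d))
    (hcoefA : Tendsto (fun n : ℕ => ‖(n : ℝ) ^ (-χ) • ∑ k ∈ Icc 1 n, (Ab k - A)‖)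
      atTop (𝓝 0)) :
    Tendsto (fun n : ℕ =>
        ‖(n : ℝ) ^ (-χ) • ∑ k ∈ Icc 1 n, (((k : ℝ) + 1) / (k : ℝ)) ^ γ • (Ab k - A)‖)
      atTop (𝓝 0) := by
  obtain ⟨hχ0, hχ1⟩ := hχ
  obtain ⟨hγ0, hγχ⟩ := hγ
  set B : ℕ → EuclideanSpace ℝ (Fin d) →L[ℝ] EuclideanSpace ℝ (Fin d) :=
    fun k => Ab k - A with hBdef
  set c : ℕ → ℝ := fun k => (((k : ℝ) + 1) / (k : ℝ)) ^ γ with hcdef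
  set S : ℕ → EuclideanSpace ℝ (Fin d) →L[ℝ] EuclideanSpace ℝ (Fin d) :=
    fun m => ∑ k ∈ Icc 1 m, B k with hSdef
  have hns : ∀ (r : ℝ) (x : EuclideanSpace ℝ (Fin d) →L[ℝ] EuclideanSpace ℝ (Fin d)),
      ‖r • x‖ = |r| * ‖x‖ := fun r x => (norm_smul r x).trans (by rw [Real.norm_eq_abs])
  -- basic facts about c
  have hc_nonneg : ∀ k : ℕ, 0 ≤ c k := by
    intro k
    exact Real.rpow_nonneg (by positivity) γ
  have hc1 : c 1 = 2 ^ γ := by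
    simp [hcdef]
    norm_num
  have hc_le : ∀ k : ℕ, 1 ≤ k → c k ≤ 2 ^ γ := by
    intro k hk
    have hk0 : (0:ℝ) < (k:ℝ) := by exact_mod_cast hk
    apply Real.rpow_le_rpow (by positivity) _ hγ0
    rw [div_le_iff₀ hk0]
    have : (1:ℝ) ≤ (k:ℝ) := by exact_mod_cast hk
    linarith
  have hc_anti : ∀ k : ℕ, 1 ≤ k → c (k + 1) ≤ c k := by
    intro k hk
    have hk0 : (0:ℝ) < (k:ℝ) := by exact_mod_cast hk
    apply Real.rpow_le_rpow (by positivity) _ hγ0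
    rw [div_le_div_iff₀ (by positivity) hk0]
    push_cast
    nlinarith
  -- S as a range sum
  have hSr : ∀ m : ℕ, S m = ∑ i ∈ range m, B (1 + i) := by
    intro m
    simp only [hSdef]
    rw [← Finset.Ico_add_one_right_eq_Icc, Finset.sum_Ico_eq_sum_range]
    simp
  -- Abel summation identity
  have key : ∀ n : ℕ, 1 ≤ n →
      (∑ k ∈ Icc 1 n, c k • B k) =
        c n • S n - ∑ i ∈ range (n - 1), (c (i + 2) - c (i + 1)) • S (i + 1) := by
    intro n hn
    rw [← Finset.Ico_add_one_right_eq_Icc, Finset.sum_Ico_eq_sum_range]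
    have h1 : n + 1 - 1 = n := by omega
    rw [h1]
    have := Finset.sum_range_by_parts (fun i => c (1 + i)) (fun i => B (1 + i)) n
    simp only at this
    rw [this]
    have h2 : 1 + (n - 1) = n := by omega
    rw [h2, ← hSr n]
    congr 1
    apply Finset.sum_congr rfl
    intro i _
    have e1 : 1 + (i + 1) = i + 2 := by omega
    have e2 : 1 + i = i + 1 := by omega
    rw [e1, e2, ← hSr (i + 1)]
  -- norm bound using the Abel identity
  have keybound : ∀ (M δ : ℝ), 0 ≤ M → 0 ≤ δ →
      (∀ k : ℕ, 1 ≤ k → ‖S k‖ ≤ M + δ * (k : ℝ) ^ χ) →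
      ∀ n : ℕ, 1 ≤ n →
      ‖∑ k ∈ Icc 1 n, c k • B k‖ ≤ 2 ^ γ * (M + δ * (n : ℝ) ^ χ) := by
    intro M δ hM hδ hSb n hn
    rw [key n hn]
    set T : ℝ := M + δ * (n : ℝ) ^ χ with hTdef
    have hT0 : 0 ≤ T := by positivity
    have hST : ∀ k : ℕ, 1 ≤ k → k ≤ n → ‖S k‖ ≤ T := by
      intro k hk1 hkn
      refine (hSb k hk1).trans ?_
      have : (k : ℝ) ^ χ ≤ (n : ℝ) ^ χ := by
        apply Real.rpow_le_rpow (by positivity) (by exact_mod_cast hkn) (le_of_lt hχ0)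
      nlinarith
    calc ‖c n • S n - ∑ i ∈ range (n - 1), (c (i + 2) - c (i + 1)) • S (i + 1)‖
        ≤ ‖c n • S n‖ + ‖∑ i ∈ range (n - 1), (c (i + 2) - c (i + 1)) • S (i + 1)‖ :=
          norm_sub_le _ _
      _ ≤ c n * T + ∑ i ∈ range (n - 1), (c (i + 1) - c (i + 2)) * T := by
          apply add_le_add
          · rw [hns, abs_of_nonneg (hc_nonneg n)]
            exact mul_le_mul_of_nonneg_left (hST n hn le_rfl) (hc_nonneg n)
          · refine (norm_sum_le _ _).trans ?_
            apply Finset.sum_le_sum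
            intro i hi
            rw [hns]
            have hanti : c (i + 2) ≤ c (i + 1) := hc_anti (i + 1) (by omega)
            rw [abs_of_nonpos (by linarith)]
            have hi' : i + 1 ≤ n := by
              have := Finset.mem_range.mp hi
              omega
            have := hST (i + 1) (by omega) hi'
            nlinarith
      _ = c n * T + (c 1 - c n) * T := by
          rw [← Finset.sum_mul]
          congr 2
          have := Finset.sum_range_sub' (fun i => c (i + 1)) (n - 1)
          rw [this]
          congr 2
          omega
      _ = c 1 * T := by ring
      _ ≤ 2 ^ γ * T := by
          apply mul_le_mul_of_nonneg_right _ hT0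
          exact hc_le 1 le_rfl
  -- final assembly
  rw [Metric.tendsto_atTop] at hcoefA ⊢
  intro ε hε
  have h2γ : (0:ℝ) < 2 ^ γ := Real.rpow_pos_of_pos (by norm_num) γ
  set δ : ℝ := ε / (4 * 2 ^ γ) with hδdef
  have hδ0 : 0 < δ := by positivity
  obtain ⟨N₀', hN₀'⟩ := hcoefA δ hδ0
  set N₀ : ℕ := max N₀' 1 with hN₀def
  have hN₀1 : 1 ≤ N₀ := le_max_right _ _
  -- ‖S k‖ ≤ δ k^χ for k ≥ N₀
  have hStail : ∀ k : ℕ, N₀ ≤ k → ‖S k‖ ≤ δ * (k : ℝ) ^ χ := by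
    intro k hk
    have hk1 : 1 ≤ k := le_trans hN₀1 hk
    have hk0 : (0:ℝ) < (k:ℝ) := by exact_mod_cast hk1
    have := hN₀' k (le_trans (le_max_left _ _) hk)
    rw [Real.dist_eq, sub_zero, abs_of_nonneg (norm_nonneg _)] at this
    rw [hns, Real.rpow_neg (le_of_lt hk0),
      abs_of_nonneg (inv_nonneg.mpr (Real.rpow_nonneg (le_of_lt hk0) χ))] at this
    have hpow : (0:ℝ) < (k : ℝ) ^ χ := Real.rpow_pos_of_pos hk0 χ
    have hEq : S k = Finset.sum (Icc 1 k) B := rfl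
    rw [hEq]
    rw [inv_mul_lt_iff₀ hpow] at this
    nlinarith [this]
  obtain ⟨M, hM0, hMb⟩ : ∃ M : ℝ, 0 ≤ M ∧ ∀ k ≤ N₀, ‖S k‖ ≤ M := by
    refine ⟨∑ k ∈ range (N₀ + 1), ‖S k‖, Finset.sum_nonneg fun k _ => norm_nonneg _, ?_⟩
    intro k hk
    exact Finset.single_le_sum (fun i _ => norm_nonneg (S i)) (Finset.mem_range.mpr (by omega))
  have hSb : ∀ k : ℕ, 1 ≤ k → ‖S k‖ ≤ M + δ * (k : ℝ) ^ χ := by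
    intro k hk
    have hpow : (0:ℝ) ≤ δ * (k : ℝ) ^ χ := by positivity
    rcases le_or_gt k N₀ with h | h
    · have := hMb k h
      linarith
    · have := hStail k (le_of_lt h)
      linarith
  -- n^{-χ} tends to 0
  have hrpow : Tendsto (fun n : ℕ => (n : ℝ) ^ (-χ)) atTop (𝓝 0) :=
    (tendsto_rpow_neg_atTop hχ0).comp tendsto_natCast_atTop_atTop
  rw [Metric.tendsto_atTop] at hrpow
  have hMγ : 0 ≤ 2 ^ γ * M := mul_nonneg (le_of_lt h2γ) hM0
  have hpos : (0:ℝ) < 2 ^ γ * M + 1 := by linarith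
  obtain ⟨N₁, hN₁⟩ := hrpow (ε / (2 * (2 ^ γ * M + 1))) (div_pos hε (by linarith))
  refine ⟨max (max N₀ N₁) 1, fun n hn => ?_⟩
  have hn1 : 1 ≤ n := le_trans (le_max_right _ _) hn
  have hnN₁ : N₁ ≤ n := le_trans (le_trans (le_max_right _ _) (le_max_left _ _)) hn
  have hn0 : (0:ℝ) < (n:ℝ) := by exact_mod_cast hn1
  rw [Real.dist_eq, sub_zero, abs_of_nonneg (norm_nonneg _)]
  have hbound := keybound M δ hM0 (le_of_lt hδ0) hSb n hn1
  have hnegpow : (0:ℝ) ≤ (n : ℝ) ^ (-χ) := Real.rpow_nonneg (le_of_lt hn0) _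
  have hmul : (n : ℝ) ^ (-χ) * (n : ℝ) ^ χ = 1 := by
    rw [Real.rpow_neg (le_of_lt hn0)]
    exact inv_mul_cancel₀ (ne_of_gt (Real.rpow_pos_of_pos hn0 χ))
  have step1 : ‖(n : ℝ) ^ (-χ) • ∑ k ∈ Icc 1 n, c k • B k‖
      ≤ (n : ℝ) ^ (-χ) * (2 ^ γ * (M + δ * (n : ℝ) ^ χ)) := by
    rw [hns, abs_of_nonneg hnegpow]
    exact mul_le_mul_of_nonneg_left hbound hnegpow
  have step2 : (n : ℝ) ^ (-χ) * (2 ^ γ * (M + δ * (n : ℝ) ^ χ))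
      = 2 ^ γ * M * (n : ℝ) ^ (-χ) + 2 ^ γ * δ := by
    have : (n : ℝ) ^ (-χ) * (2 ^ γ * (M + δ * (n : ℝ) ^ χ))
        = 2 ^ γ * M * (n : ℝ) ^ (-χ) + 2 ^ γ * δ * ((n : ℝ) ^ (-χ) * (n : ℝ) ^ χ) := by
      ring
    rw [this, hmul, mul_one]
  have hsmall : 2 ^ γ * M * (n : ℝ) ^ (-χ) < ε / 2 := by
    have := hN₁ n hnN₁
    rw [Real.dist_eq, sub_zero, abs_of_nonneg hnegpow] at this
    have h1 : 2 ^ γ * M * (n : ℝ) ^ (-χ)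
        ≤ (2 ^ γ * M + 1) * (n : ℝ) ^ (-χ) :=
      mul_le_mul_of_nonneg_right (by linarith) hnegpow
    have h2 : (2 ^ γ * M + 1) * (n : ℝ) ^ (-χ)
        < (2 ^ γ * M + 1) * (ε / (2 * (2 ^ γ * M + 1))) :=
      mul_lt_mul_of_pos_left this hpos
    have h3 : (2 ^ γ * M + 1) * (ε / (2 * (2 ^ γ * M + 1))) = ε / 2 := by
      have he : ε / (2 * (2 ^ γ * M + 1)) = (2 ^ γ * M + 1)⁻¹ * (ε / 2) := by
        rw [div_eq_mul_inv, mul_inv]; ring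
      rw [he, ← mul_assoc, mul_inv_cancel₀ (ne_of_gt hpos), one_mul]
    linarith
  have hδsmall : 2 ^ γ * δ < ε / 2 := by
    rw [hδdef]
    have he : ε / (4 * 2 ^ γ) = (2 ^ γ)⁻¹ * (ε / 4) := by
      ring
    rw [he, ← mul_assoc, mul_inv_cancel₀ (ne_of_gt h2γ), one_mul]
    linarith
  calc ‖(n : ℝ) ^ (-χ) • ∑ k ∈ Icc 1 n, c k • B k‖
      ≤ (n : ℝ) ^ (-χ) * (2 ^ γ * (M + δ * (n : ℝ) ^ χ)) := step1
    _ = 2 ^ γ * M * (n : ℝ) ^ (-χ) + 2 ^ γ * δ := step2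
    _ < ε / 2 + ε / 2 := by linarith
    _ = ε := by ring
end

section
/- Let χ ∈ (0,1), γ ∈ [0,χ), d a positive integer, h ∈ ℝ^d, {Ā_k} a sequence of real d×d matrices and {b̄_k} a sequence in ℝ^d. If |n^{-(χ−γ)} Σ_{k=1}^n (b̄_k − Ā_k h)| → 0 as n → ∞, then |n^{-χ} Σ_{k=1}^n (k+1)^{γ} (b̄_k − Ā_k h)| → 0 as n → ∞. -/
open Filter Finset
open scoped Topology

private lemma telescope_Ico (f : ℕ → ℝ) {a b : ℕ} (hab : a ≤ b) :
    ∑ i ∈ Finset.Ico a b, (f (i + 1) - f i) = f b - f a := by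
  rw [Finset.sum_Ico_eq_sub _ hab, Finset.sum_range_sub, Finset.sum_range_sub]
  ring

/-- Step 2 of the proof of Theorem 1 (vector part): if
`|n^{-(χ−γ)} Σ_{k=1}^n (b̄_k − Ā_k h)| → 0` then
`|n^{-χ} Σ_{k=1}^n (k+1)^γ (b̄_k − Ā_k h)| → 0`. -/
theorem stmt_17 (d : ℕ) (hd : 0 < d) (χ γ : ℝ) (hχ : χ ∈ Set.Ioo (0 : ℝ) 1)
    (hγ : γ ∈ Set.Ico (0 : ℝ) χ)
    (h : EuclideanSpace ℝ (Fin d))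
    (Ab : ℕ → EuclideanSpace ℝ (Fin d) →L[ℝ] EuclideanSpace ℝ (Fin d))
    (bb : ℕ → EuclideanSpace ℝ (Fin d))
    (hcoef : Tendsto (fun n : ℕ => ‖(n : ℝ) ^ (-(χ - γ)) • ∑ k ∈ Icc 1 n, (bb k - Ab k h)‖)
      atTop (𝓝 0)) :
    Tendsto (fun n : ℕ =>
        ‖(n : ℝ) ^ (-χ) • ∑ k ∈ Icc 1 n, ((k : ℝ) + 1) ^ γ • (bb k - Ab k h)‖)
      atTop (𝓝 0) := by
  obtain ⟨hχ0, hχ1⟩ := hχ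
  obtain ⟨hγ0, hγχ⟩ := hγ
  set v : ℕ → EuclideanSpace ℝ (Fin d) := fun k => bb k - Ab k h with hv
  set S : ℕ → EuclideanSpace ℝ (Fin d) := fun n => ∑ i ∈ Finset.range n, v (i + 1) with hSdef
  set f : ℕ → ℝ := fun i => ((i : ℝ) + 2) ^ γ with hfdef
  have h2γ : (0:ℝ) < (2:ℝ) ^ γ := Real.rpow_pos_of_pos (by norm_num) _
  have hfnonneg : ∀ i, 0 ≤ f i := fun i => Real.rpow_nonneg (by positivity) _
  have hfmono : Monotone f := by
    intro a b hab
    exact Real.rpow_le_rpow (by positivity) (by exact_mod_cast by linarith [(Nat.cast_le (α := ℝ)).2 hab] : ((a:ℝ)+2) ≤ (b:ℝ)+2) hγ0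
  -- rewrite Icc sums as range sums
  have hIcc : ∀ (w : ℕ → EuclideanSpace ℝ (Fin d)) (n : ℕ),
      ∑ k ∈ Finset.Icc 1 n, w k = ∑ i ∈ Finset.range n, w (i + 1) := by
    intro w n
    rw [← Finset.Ico_add_one_right_eq_Icc, Finset.sum_Ico_eq_sum_range]
    simp [add_comm]
  -- φ tendsto
  have hφ : Tendsto (fun n : ℕ => ((n : ℝ)) ^ (γ - χ) * ‖S n‖) atTop (𝓝 0) := by
    refine hcoef.congr fun n => ?_
    rw [norm_smul, Real.norm_eq_abs,
      abs_of_nonneg (Real.rpow_nonneg (Nat.cast_nonneg n) _), neg_sub, hIcc]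
  -- quantitative form of hφ
  have key : ∀ ε > (0:ℝ), ∃ N : ℕ, 1 ≤ N ∧ ∀ n ≥ N, ‖S n‖ ≤ ε * (n : ℝ) ^ (χ - γ) := by
    intro ε hε
    have := (Metric.tendsto_atTop.1 hφ) ε hε
    obtain ⟨N, hN⟩ := this
    refine ⟨max N 1, le_max_right _ _, fun n hn => ?_⟩
    have hn1 : 1 ≤ n := le_trans (le_max_right _ _) hn
    have hx0 : (0:ℝ) < (n:ℝ) := by exact_mod_cast hn1
    have hb := hN n (le_trans (le_max_left _ _) hn)
    rw [Real.dist_eq, sub_zero,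
      abs_of_nonneg (by positivity : (0:ℝ) ≤ (n:ℝ) ^ (γ - χ) * ‖S n‖)] at hb
    have hid : (n:ℝ) ^ (χ - γ) * ((n:ℝ) ^ (γ - χ) * ‖S n‖) = ‖S n‖ := by
      rw [← mul_assoc, ← Real.rpow_add hx0]
      norm_num
    calc ‖S n‖ = (n:ℝ) ^ (χ - γ) * ((n:ℝ) ^ (γ - χ) * ‖S n‖) := hid.symm
      _ ≤ (n:ℝ) ^ (χ - γ) * ε := by
          exact mul_le_mul_of_nonneg_left hb.le (by positivity)
      _ = ε * (n:ℝ) ^ (χ - γ) := mul_comm _ _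
  -- goal function rewritten
  have hTr : ∀ n : ℕ, (∑ k ∈ Finset.Icc 1 n, ((k : ℝ) + 1) ^ γ • v k)
      = ∑ i ∈ Finset.range n, f i • v (i + 1) := by
    intro n
    rw [hIcc (fun k => ((k : ℝ) + 1) ^ γ • v k) n]
    refine Finset.sum_congr rfl fun i _ => ?_
    have : ((i + 1 : ℕ) : ℝ) + 1 = (i : ℝ) + 2 := by push_cast; ring
    rw [this]
  -- Abel summation
  have habel : ∀ n : ℕ, ∑ i ∈ Finset.range n, f i • v (i + 1)
      = f (n - 1) • S n - ∑ i ∈ Finset.range (n - 1), (f (i + 1) - f i) • S (i + 1) :=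
    fun n => Finset.sum_range_by_parts f (fun i => v (i + 1)) n
  -- norm bound
  have hnorm : ∀ n : ℕ, ‖∑ i ∈ Finset.range n, f i • v (i + 1)‖
      ≤ f (n - 1) * ‖S n‖ + ∑ i ∈ Finset.range (n - 1), (f (i + 1) - f i) * ‖S (i + 1)‖ := by
    intro n
    rw [habel n]
    refine le_trans (norm_sub_le _ _) (add_le_add ?_ ?_)
    · rw [norm_smul, Real.norm_eq_abs, abs_of_nonneg (hfnonneg _)]
    · refine le_trans (norm_sum_le _ _) (Finset.sum_le_sum fun i _ => ?_)
      rw [norm_smul, Real.norm_eq_abs, abs_of_nonneg (sub_nonneg.2 (hfmono (Nat.le_succ i)))]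
  -- main ε argument
  rw [Metric.tendsto_atTop]
  intro ε' hε'
  set ε : ℝ := ε' / (4 * (2:ℝ) ^ γ) with hεdef
  have hε : 0 < ε := by positivity
  obtain ⟨N, hN1, hNbound⟩ := key ε hε
  set C : ℝ := ∑ i ∈ Finset.range N, (f (i + 1) - f i) * ‖S (i + 1)‖ with hCdef
  -- eventual smallness of the two vanishing pieces
  have h1 : Tendsto (fun n : ℕ => (2:ℝ) ^ γ * ((n : ℝ) ^ (γ - χ) * ‖S n‖)) atTop (𝓝 0) := by
    simpa using hφ.const_mul ((2:ℝ) ^ γ)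
  have h2 : Tendsto (fun n : ℕ => C * (n : ℝ) ^ (-χ)) atTop (𝓝 0) := by
    have : Tendsto (fun n : ℕ => (n : ℝ) ^ (-χ)) atTop (𝓝 0) :=
      (tendsto_rpow_neg_atTop hχ0).comp tendsto_natCast_atTop_atTop
    simpa using this.const_mul C
  obtain ⟨N1, hN1'⟩ := (Metric.tendsto_atTop.1 h1) (ε' / 4) (by positivity)
  obtain ⟨N2, hN2'⟩ := (Metric.tendsto_atTop.1 h2) (ε' / 4) (by positivity)
  refine ⟨max (max N1 N2) (N + 1), fun n hn => ?_⟩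
  have hnN1 : N1 ≤ n := le_trans (le_trans (le_max_left _ _) (le_max_left _ _)) hn
  have hnN2 : N2 ≤ n := le_trans (le_trans (le_max_right _ _) (le_max_left _ _)) hn
  have hnN : N + 1 ≤ n := le_trans (le_max_right _ _) hn
  have hn1 : 1 ≤ n := le_trans (by omega) hnN
  have hx0 : (0:ℝ) < (n:ℝ) := by exact_mod_cast hn1
  have hx1 : (1:ℝ) ≤ (n:ℝ) := by exact_mod_cast hn1
  -- bound on f (n-1)
  have hfb : f (n - 1) ≤ (2:ℝ) ^ γ * (n:ℝ) ^ γ := by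
    have hc : ((n - 1 : ℕ) : ℝ) = (n:ℝ) - 1 := by
      rw [Nat.cast_sub hn1]; norm_num
    have : f (n - 1) = ((n:ℝ) + 1) ^ γ := by rw [hfdef]; simp only []; rw [hc]; ring_nf
    rw [this, ← Real.mul_rpow (by norm_num) hx0.le]
    exact Real.rpow_le_rpow (by linarith) (by linarith) hγ0
  -- split the middle sum
  have hsplit : ∑ i ∈ Finset.range (n - 1), (f (i + 1) - f i) * ‖S (i + 1)‖
      = C + ∑ i ∈ Finset.Ico N (n - 1), (f (i + 1) - f i) * ‖S (i + 1)‖ := by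
    rw [hCdef, Finset.range_eq_Ico, Finset.range_eq_Ico]
    exact (Finset.sum_Ico_consecutive _ (Nat.zero_le N) (by omega : N ≤ n - 1)).symm
  -- tail bound
  have htail : ∑ i ∈ Finset.Ico N (n - 1), (f (i + 1) - f i) * ‖S (i + 1)‖
      ≤ (2:ℝ) ^ γ * (n:ℝ) ^ γ * (ε * (n:ℝ) ^ (χ - γ)) := by
    calc ∑ i ∈ Finset.Ico N (n - 1), (f (i + 1) - f i) * ‖S (i + 1)‖
        ≤ ∑ i ∈ Finset.Ico N (n - 1), (f (i + 1) - f i) * (ε * (n:ℝ) ^ (χ - γ)) := by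
          refine Finset.sum_le_sum fun i hi => ?_
          obtain ⟨hiN, hin⟩ := Finset.mem_Ico.1 hi
          have hb1 : ‖S (i + 1)‖ ≤ ε * ((i + 1 : ℕ) : ℝ) ^ (χ - γ) :=
            hNbound (i + 1) (by omega)
          have hb2 : ((i + 1 : ℕ) : ℝ) ^ (χ - γ) ≤ (n:ℝ) ^ (χ - γ) :=
            Real.rpow_le_rpow (by positivity) (by exact_mod_cast by omega) (by linarith)
          exact mul_le_mul_of_nonneg_left
            (le_trans hb1 (mul_le_mul_of_nonneg_left hb2 hε.le))
            (sub_nonneg.2 (hfmono (Nat.le_succ i)))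
      _ = (f (n - 1) - f N) * (ε * (n:ℝ) ^ (χ - γ)) := by
          rw [← Finset.sum_mul, telescope_Ico f (by omega : N ≤ n - 1)]
      _ ≤ (2:ℝ) ^ γ * (n:ℝ) ^ γ * (ε * (n:ℝ) ^ (χ - γ)) := by
          refine mul_le_mul_of_nonneg_right ?_ (by positivity)
          linarith [hfnonneg N, hfb]
  -- combine
  have hmain : ‖(n : ℝ) ^ (-χ) • ∑ k ∈ Finset.Icc 1 n, ((k : ℝ) + 1) ^ γ • v k‖
      ≤ (2:ℝ) ^ γ * ((n:ℝ) ^ (γ - χ) * ‖S n‖) + C * (n:ℝ) ^ (-χ) + (2:ℝ) ^ γ * ε := by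
    have hxneg : (0:ℝ) ≤ (n:ℝ) ^ (-χ) := by positivity
    rw [norm_smul, Real.norm_eq_abs, abs_of_nonneg hxneg, hTr n]
    have hb : ‖∑ i ∈ Finset.range n, f i • v (i + 1)‖
        ≤ (2:ℝ) ^ γ * (n:ℝ) ^ γ * ‖S n‖ + C + (2:ℝ) ^ γ * (n:ℝ) ^ γ * (ε * (n:ℝ) ^ (χ - γ)) := by
      refine le_trans (hnorm n) ?_
      rw [hsplit]
      have := mul_le_mul_of_nonneg_right hfb (norm_nonneg (S n))
      linarith [htail]
    refine le_trans (mul_le_mul_of_nonneg_left hb hxneg) ?_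
    have e1 : (n:ℝ) ^ (-χ) * (n:ℝ) ^ γ = (n:ℝ) ^ (γ - χ) := by
      rw [← Real.rpow_add hx0]; ring_nf
    have e2 : (n:ℝ) ^ (-χ) * ((n:ℝ) ^ γ * (n:ℝ) ^ (χ - γ)) = 1 := by
      rw [← Real.rpow_add hx0, ← Real.rpow_add hx0]
      norm_num
    refine le_of_eq ?_
    linear_combination ((2:ℝ) ^ γ * ‖S n‖) * e1 + ((2:ℝ) ^ γ * ε) * e2
  -- final numeric estimate
  have ha := hN1' n hnN1
  have hb := hN2' n hnN2
  rw [Real.dist_eq, sub_zero] at ha hb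
  have ha' : (2:ℝ) ^ γ * ((n:ℝ) ^ (γ - χ) * ‖S n‖) < ε' / 4 :=
    lt_of_le_of_lt (le_abs_self _) ha
  have hb' : C * (n:ℝ) ^ (-χ) < ε' / 4 := lt_of_le_of_lt (le_abs_self _) hb
  have hc' : (2:ℝ) ^ γ * ε = ε' / 4 := by
    rw [hεdef]; field_simp
  rw [Real.dist_eq, sub_zero, abs_of_nonneg (norm_nonneg _)]
  calc ‖(n : ℝ) ^ (-χ) • ∑ k ∈ Finset.Icc 1 n, ((k : ℝ) + 1) ^ γ • v k‖
      ≤ (2:ℝ) ^ γ * ((n:ℝ) ^ (γ - χ) * ‖S n‖) + C * (n:ℝ) ^ (-χ) + (2:ℝ) ^ γ * ε := hmain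
    _ < ε' / 4 + ε' / 4 + ε' / 4 := by linarith
    _ < ε' := by linarith
end

section
/- Let χ ∈ (0,1) and a > 0, and define n_k = ⌊(ak)^{1/(1−χ)}⌋ for k ≥ 0 and a' = a/(1−χ). Then |Σ_{l=n_k}^{n_{k+1}−1} l^{-χ} − a'| → 0 as k → ∞. -/
open Filter Finset
open scoped Topology

/-- Equation (32): with `n_k = ⌊(ak)^{1/(1−χ)}⌋` and `a' = a/(1−χ)`,
`|Σ_{l=n_k}^{n_{k+1}−1} l^{-χ} − a'| → 0` as `k → ∞`. -/
theorem stmt_18 (χ a : ℝ) (hχ : χ ∈ Set.Ioo (0 : ℝ) 1) (ha : 0 < a) :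
    Tendsto (fun k : ℕ =>
        |(∑ l ∈ Ico (⌊(a * k) ^ (1 / (1 - χ))⌋₊) (⌊(a * (k + 1)) ^ (1 / (1 - χ))⌋₊),
          (l : ℝ) ^ (-χ)) - a / (1 - χ)|)
      atTop (𝓝 0) := by
  obtain ⟨hχ0, hχ1⟩ := hχ
  have hq0 : (0:ℝ) < 1 - χ := by linarith
  have hq1 : (1:ℝ) - χ ≤ 1 := by linarith
  have hp0 : (0:ℝ) < 1 / (1 - χ) := by positivity
  have hpq : (1 / (1 - χ)) * (1 - χ) = 1 := by field_simp
  set n : ℕ → ℕ := fun k => ⌊(a * k) ^ (1 / (1 - χ))⌋₊ with hndef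
  -- the arguments tend to infinity
  have hak : Tendsto (fun k : ℕ => a * k) atTop atTop :=
    (tendsto_natCast_atTop_atTop (R := ℝ)).const_mul_atTop ha
  have hnk : Tendsto n atTop atTop :=
    (tendsto_nat_floor_atTop).comp ((tendsto_rpow_atTop hp0).comp hak)
  have hnkR : Tendsto (fun k => (n k : ℝ)) atTop atTop :=
    tendsto_natCast_atTop_atTop.comp hnk
  -- basic facts
  have hak0 : ∀ k : ℕ, (0:ℝ) ≤ a * k := fun k => by positivity
  have hmono : ∀ k : ℕ, n k ≤ n (k + 1) := by
    intro k
    apply Nat.floor_le_floor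
    apply Real.rpow_le_rpow (hak0 k) _ hp0.le
    push_cast
    nlinarith [Nat.cast_nonneg (α := ℝ) k]
  -- the error term e
  set e : ℕ → ℝ := fun k => (n k : ℝ) ^ (1 - χ) - a * k with hedef
  have he_nonpos : ∀ k, e k ≤ 0 := by
    intro k
    have h1 : (n k : ℝ) ≤ (a * k) ^ (1 / (1 - χ)) := Nat.floor_le (by positivity)
    have h2 : (n k : ℝ) ^ (1 - χ) ≤ ((a * k) ^ (1 / (1 - χ))) ^ (1 - χ) :=
      Real.rpow_le_rpow (Nat.cast_nonneg _) h1 hq0.le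
    rw [← Real.rpow_mul (hak0 k), hpq, Real.rpow_one] at h2
    simp only [hedef]
    linarith
  have he_lb : ∀ᶠ k in atTop, -((1 - χ) * (n k : ℝ) ^ ((1 - χ) - 1)) ≤ e k := by
    filter_upwards [hnk.eventually_ge_atTop 1] with k hk1
    have hN1 : (1:ℝ) ≤ (n k : ℝ) := by exact_mod_cast hk1
    have hN0 : (0:ℝ) < (n k : ℝ) := by linarith
    have h1 : (a * k) ^ (1 / (1 - χ)) < (n k : ℝ) + 1 := by
      have := Nat.lt_floor_add_one ((a * k) ^ (1 / (1 - χ)))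
      exact_mod_cast this
    have h2 : a * k < ((n k : ℝ) + 1) ^ (1 - χ) := by
      have := Real.rpow_lt_rpow (Real.rpow_nonneg (hak0 k) _) h1 hq0
      rwa [← Real.rpow_mul (hak0 k), hpq, Real.rpow_one] at this
    have h3 : ((n k : ℝ) + 1) ^ (1 - χ)
        ≤ (n k : ℝ) ^ (1 - χ) + (1 - χ) * (n k : ℝ) ^ ((1 - χ) - 1) := by
      have heq : (n k : ℝ) + 1 = (n k : ℝ) * (1 + 1 / (n k : ℝ)) := by field_simp
      have hb : (1 + 1 / (n k : ℝ)) ^ (1 - χ) ≤ 1 + (1 - χ) * (1 / (n k : ℝ)) :=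
        rpow_one_add_le_one_add_mul_self (by
          have : (0:ℝ) ≤ 1 / (n k : ℝ) := by positivity
          linarith) hq0.le hq1
      calc ((n k : ℝ) + 1) ^ (1 - χ)
          = (n k : ℝ) ^ (1 - χ) * (1 + 1 / (n k : ℝ)) ^ (1 - χ) := by
            rw [heq, Real.mul_rpow hN0.le (by positivity)]
        _ ≤ (n k : ℝ) ^ (1 - χ) * (1 + (1 - χ) * (1 / (n k : ℝ))) :=
            mul_le_mul_of_nonneg_left hb (Real.rpow_nonneg hN0.le _)
        _ = (n k : ℝ) ^ (1 - χ) + (1 - χ) * ((n k : ℝ) ^ (1 - χ) / (n k : ℝ)) := by ring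
        _ = (n k : ℝ) ^ (1 - χ) + (1 - χ) * (n k : ℝ) ^ ((1 - χ) - 1) := by
            rw [← Real.rpow_sub_one hN0.ne']
    simp only [hedef]
    nlinarith
  have hN1tend : Tendsto (fun k => (1 - χ) * (n k : ℝ) ^ ((1 - χ) - 1)) atTop (𝓝 0) := by
    have h := (tendsto_rpow_neg_atTop (by linarith : (0:ℝ) < χ)).comp hnkR
    have h' : Tendsto (fun k => (n k : ℝ) ^ ((1 - χ) - 1)) atTop (𝓝 0) := by
      have : ((1 - χ) - 1 : ℝ) = -χ := by ring
      rw [this]; exact h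
    simpa using h'.const_mul (1 - χ)
  have he0 : Tendsto e atTop (𝓝 0) :=
    tendsto_of_tendsto_of_tendsto_of_le_of_le' (by simpa using hN1tend.neg)
      tendsto_const_nhds he_lb (Eventually.of_forall he_nonpos)
  -- bounds on the sum via the integral
  set S : ℕ → ℝ := fun k => ∑ l ∈ Ico (n k) (n (k + 1)), (l : ℝ) ^ (-χ) with hSdef
  set lo : ℕ → ℝ := fun k => ((n (k + 1) : ℝ) ^ (1 - χ) - (n k : ℝ) ^ (1 - χ)) / (1 - χ)
    with hlodef
  have hInt : ∀ k : ℕ, (∫ x in (n k : ℝ)..(n (k + 1) : ℝ), x ^ (-χ)) = lo k := by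
    intro k
    rw [integral_rpow (Or.inl (by linarith : (-1:ℝ) < -χ))]
    simp only [hlodef]
    rw [show (-χ + 1 : ℝ) = 1 - χ by ring]
  have hanti : ∀ᶠ k in atTop,
      AntitoneOn (fun x : ℝ => x ^ (-χ)) (Set.Icc (n k : ℝ) (n (k + 1) : ℝ)) := by
    filter_upwards [hnk.eventually_ge_atTop 1] with k hk1
    intro x hx y hy hxy
    have hk1' : (1:ℝ) ≤ (n k : ℝ) := by exact_mod_cast hk1
    have hx0 : (0:ℝ) < x := lt_of_lt_of_le (by linarith) hx.1
    exact Real.rpow_le_rpow_of_nonpos hx0 hxy (by linarith)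
  have hlow : ∀ᶠ k in atTop, lo k ≤ S k := by
    filter_upwards [hanti] with k hA
    rw [← hInt k]
    exact AntitoneOn.integral_le_sum_Ico (hmono k) hA
  have hupp : ∀ᶠ k in atTop, S k ≤ lo k + (n k : ℝ) ^ (-χ) := by
    filter_upwards [hanti] with k hA
    have hshift := AntitoneOn.sum_le_integral_Ico (hmono k) hA
    rw [hInt k] at hshift
    have hsum : (∑ i ∈ Ico (n k) (n (k + 1)), ((i + 1 : ℕ) : ℝ) ^ (-χ))
        = S k + ((n (k + 1) : ℕ) : ℝ) ^ (-χ) - ((n k : ℕ) : ℝ) ^ (-χ) := by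
      have h1 : ∑ i ∈ Ico (n k) (n (k + 1)), ((i + 1 : ℕ) : ℝ) ^ (-χ)
          = ∑ i ∈ Ico (n k + 1) (n (k + 1) + 1), ((i : ℕ) : ℝ) ^ (-χ) := by
        rw [Finset.sum_Ico_eq_sum_range, Finset.sum_Ico_eq_sum_range]
        simp only [Nat.add_sub_add_right]
        refine Finset.sum_congr rfl fun i _ => ?_
        congr 1
        push_cast
        ring
      rw [h1]
      have h2 : ∑ i ∈ Ico (n k) (n (k + 1) + 1), ((i : ℕ) : ℝ) ^ (-χ)
          = (∑ i ∈ Ico (n k) (n (k + 1)), ((i : ℕ) : ℝ) ^ (-χ))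
            + ((n (k + 1) : ℕ) : ℝ) ^ (-χ) :=
        Finset.sum_Ico_succ_top (hmono k) _
      have h3 : ∑ i ∈ Ico (n k) (n (k + 1) + 1), ((i : ℕ) : ℝ) ^ (-χ)
          = ((n k : ℕ) : ℝ) ^ (-χ)
            + ∑ i ∈ Ico (n k + 1) (n (k + 1) + 1), ((i : ℕ) : ℝ) ^ (-χ) :=
        Finset.sum_eq_sum_Ico_succ_bot (Nat.lt_succ_of_le (hmono k)) _
      simp only [hSdef]
      rw [h3] at h2
      linarith
    rw [hsum] at hshift
    have hpos : (0:ℝ) ≤ ((n (k + 1) : ℕ) : ℝ) ^ (-χ) := Real.rpow_nonneg (Nat.cast_nonneg _) _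
    linarith
  -- lo tends to a / (1 - χ)
  have hlo_tend : Tendsto lo atTop (𝓝 (a / (1 - χ))) := by
    have heq : lo = fun k => (a + e (k + 1) - e k) / (1 - χ) := by
      funext k
      simp only [hlodef, hedef]
      push_cast
      ring
    rw [heq]
    have h1 : Tendsto (fun k => e (k + 1)) atTop (𝓝 0) :=
      he0.comp (tendsto_add_atTop_nat 1)
    have := (((tendsto_const_nhds (x := a)).add h1).sub he0).div_const (1 - χ)
    simpa using this
  have hrest : Tendsto (fun k => (n k : ℝ) ^ (-χ)) atTop (𝓝 0) :=
    (tendsto_rpow_neg_atTop hχ0).comp hnkR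
  have hup_tend : Tendsto (fun k => lo k + (n k : ℝ) ^ (-χ)) atTop (𝓝 (a / (1 - χ))) := by
    simpa using hlo_tend.add hrest
  have hS_tend : Tendsto S atTop (𝓝 (a / (1 - χ))) :=
    tendsto_of_tendsto_of_tendsto_of_le_of_le' hlo_tend hup_tend hlow hupp
  have hfinal := (hS_tend.sub_const (a / (1 - χ))).abs
  simp only [sub_self, abs_zero] at hfinal
  have hfun : (fun k : ℕ =>
      |(∑ l ∈ Ico (⌊(a * k) ^ (1 / (1 - χ))⌋₊) (⌊(a * (k + 1)) ^ (1 / (1 - χ))⌋₊),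
        (l : ℝ) ^ (-χ)) - a / (1 - χ)|) = fun k => |S k - a / (1 - χ)| := by
    funext k
    simp only [hSdef, hndef]
    norm_num
  rw [hfun]
  exact hfinal
end

section
/- Let χ ∈ (0,1), θ ∈ (χ,1], η̄ > 0, {η_l} real numbers with 0 ≤ η_l ≤ η̄ l^{-θ}, and A a symmetric positive-definite real d×d matrix with smallest eigenvalue λ_min > 0. Then there is a constant C > 0 such that for all integers 1 ≤ r < n, ‖∏_{l=r+1}^{n−1} ((1+η_l)I − l^{-χ}A)‖ ≤ C · exp(−(λ_min/(2−2χ)) · (n^{1−χ} − (r+1)^{1−χ})), where the product is taken in decreasing order of index. -/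
open Filter Finset
open scoped RealInnerProductSpace Topology

/-- `prodDesc B p q = B_q * B_{q-1} * ⋯ * B_p` (decreasing order of index);
an empty product (`p > q`) is the identity. -/
noncomputable def prodDesc {d : ℕ}
    (B : ℕ → EuclideanSpace ℝ (Fin d) →L[ℝ] EuclideanSpace ℝ (Fin d)) (p q : ℕ) :
    EuclideanSpace ℝ (Fin d) →L[ℝ] EuclideanSpace ℝ (Fin d) :=
  ((List.range (q + 1 - p)).map fun i => B (q - i)).prod

lemma prodDesc_self {d : ℕ} (B : ℕ → EuclideanSpace ℝ (Fin d) →L[ℝ] EuclideanSpace ℝ (Fin d))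
    (p : ℕ) : prodDesc B p p = B p := by
  simp [prodDesc, List.range_succ]

lemma prodDesc_succ {d : ℕ} (B : ℕ → EuclideanSpace ℝ (Fin d) →L[ℝ] EuclideanSpace ℝ (Fin d))
    (p q : ℕ) (h : p ≤ q + 1) :
    prodDesc B p (q + 1) = B (q + 1) * prodDesc B p q := by
  have h2 : q + 1 + 1 - p = (q + 1 - p) + 1 := by omega
  simp [prodDesc, h2, List.range_succ_eq_map, List.map_map, Function.comp_def, Nat.succ_sub_succ]

lemma norm_prodDesc_le {d : ℕ} (hd : 0 < d)
    (B : ℕ → EuclideanSpace ℝ (Fin d) →L[ℝ] EuclideanSpace ℝ (Fin d)) (p q : ℕ) :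
    ‖prodDesc B p q‖ ≤ ∏ l ∈ Finset.Icc p q, ‖B l‖ := by
  haveI : Nonempty (Fin d) := ⟨⟨0, hd⟩⟩
  haveI : Nontrivial (EuclideanSpace ℝ (Fin d)) := inferInstance
  rcases le_or_gt p q with hpq | hpq
  · obtain ⟨k, rfl⟩ : ∃ k, q = p + k := ⟨q - p, by omega⟩
    clear hpq
    induction k with
    | zero => simp [prodDesc_self]
    | succ k ih =>
        rw [show p + (k+1) = (p + k) + 1 from rfl, prodDesc_succ B p (p+k) (by omega),
          Finset.prod_Icc_succ_top (by omega)]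
        calc ‖B (p+k+1) * prodDesc B p (p+k)‖
            ≤ ‖B (p+k+1)‖ * ‖prodDesc B p (p+k)‖ := norm_mul_le _ _
          _ ≤ ‖B (p+k+1)‖ * ∏ l ∈ Finset.Icc p (p+k), ‖B l‖ :=
              mul_le_mul_of_nonneg_left ih (norm_nonneg _)
          _ = (∏ l ∈ Finset.Icc p (p+k), ‖B l‖) * ‖B (p+k+1)‖ := mul_comm _ _
  · have h1 : q + 1 - p = 0 := by omega
    have h2 : Finset.Icc p q = ∅ := by rw [Finset.Icc_eq_empty]; omega
    simp [prodDesc, h1, h2]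

lemma opNorm_comb_le {d : ℕ}
    (A : EuclideanSpace ℝ (Fin d) →L[ℝ] EuclideanSpace ℝ (Fin d))
    (hAsym : ∀ x y : EuclideanSpace ℝ (Fin d), ⟪A x, y⟫ = ⟪x, A y⟫)
    (a t K : ℝ) (hK : 0 ≤ K)
    (h : ∀ μ : ℝ, (∃ x : EuclideanSpace ℝ (Fin d), x ≠ 0 ∧ A x = μ • x) → |a - t * μ| ≤ K) :
    ‖a • (1 : EuclideanSpace ℝ (Fin d) →L[ℝ] EuclideanSpace ℝ (Fin d)) - t • A‖ ≤ K := by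
  set E := EuclideanSpace ℝ (Fin d)
  have hsym : (A : E →ₗ[ℝ] E).IsSymmetric := fun x y => hAsym x y
  have hn : Module.finrank ℝ E = d := finrank_euclideanSpace_fin
  set e := hsym.eigenvectorBasis hn with he
  set μ := hsym.eigenvalues hn with hμ
  apply ContinuousLinearMap.opNorm_le_bound _ hK
  intro x
  set B := a • (1 : E →L[ℝ] E) - t • A with hB
  have hμK : ∀ i, |a - t * μ i| ≤ K := by
    intro i
    refine h (μ i) ⟨e i, ?_, ?_⟩
    · exact (hsym.hasEigenvector_eigenvectorBasis hn i).2
    · exact hsym.apply_eigenvectorBasis hn i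
  have hrepr : ∀ i, e.repr (B x) i = (a - t * μ i) * e.repr x i := by
    intro i
    have h1 : e.repr (A x) i = μ i * e.repr x i :=
      hsym.eigenvectorBasis_apply_self_apply hn x i
    have : B x = a • x - t • (A x) := by simp [hB]
    rw [this, map_sub, map_smul, map_smul]
    simp [h1]
    ring
  have hnorm : ∀ y : E, ‖y‖ = Real.sqrt (∑ i, (e.repr y i)^2) := by
    intro y
    rw [← e.repr.norm_map y, EuclideanSpace.norm_eq]
    congr 1
    apply Finset.sum_congr rfl
    intro i _
    rw [Real.norm_eq_abs, sq_abs]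
  rw [hnorm (B x), hnorm x]
  have hle : ∑ i, (e.repr (B x) i)^2 ≤ K^2 * ∑ i, (e.repr x i)^2 := by
    rw [Finset.mul_sum]
    apply Finset.sum_le_sum
    intro i _
    rw [hrepr i, mul_pow]
    have : (a - t * μ i)^2 ≤ K^2 := by
      rw [← sq_abs (a - t * μ i)]
      exact pow_le_pow_left₀ (abs_nonneg _) (hμK i) 2
    exact mul_le_mul_of_nonneg_right this (sq_nonneg _)
  calc Real.sqrt (∑ i, (e.repr (B x) i)^2) ≤ Real.sqrt (K^2 * ∑ i, (e.repr x i)^2) :=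
        Real.sqrt_le_sqrt hle
    _ = K * Real.sqrt (∑ i, (e.repr x i)^2) := by
        rw [Real.sqrt_mul (sq_nonneg K), Real.sqrt_sq hK]

lemma step_rpow {χ : ℝ} (hχ0 : 0 < χ) (hχ1 : χ < 1) {x : ℝ} (hx : 1 ≤ x) :
    (x + 1) ^ (1 - χ) - x ^ (1 - χ) ≤ (1 - χ) * x ^ (-χ) := by
  set p := 1 - χ with hp
  have hx0 : (0:ℝ) < x := lt_of_lt_of_le one_pos hx
  have hp0 : (0:ℝ) ≤ p := by simp [hp]; linarith
  have hp1 : p ≤ 1 := by simp [hp]; linarith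
  have e1 : x + 1 = x * (1 + 1/x) := by field_simp
  have e2 : (x+1)^p = x^p * (1+1/x)^p := by
    rw [e1, Real.mul_rpow hx0.le (by positivity)]
  have e3 : (1+1/x)^p ≤ 1 + p * (1/x) :=
    rpow_one_add_le_one_add_mul_self (le_trans (by norm_num) (by positivity : (0:ℝ) ≤ 1/x)) hp0 hp1
  have e4 : x ^ (-χ) = x ^ p / x := by
    rw [show -χ = p - 1 by rw [hp]; ring, Real.rpow_sub hx0, Real.rpow_one]
  have e5 : (x+1)^p ≤ x^p * (1 + p * (1/x)) :=
    e2.trans_le (mul_le_mul_of_nonneg_left e3 (Real.rpow_nonneg hx0.le p))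
  have e6 : x^p * (1 + p * (1/x)) = x^p + p * (x^p / x) := by field_simp
  rw [e4]
  have hpx : p * (x ^ p / x) = (1-χ) * (x^p / x) := by rw [hp]
  nlinarith [e5, e6]

lemma sum_rpow_lb {χ : ℝ} (hχ0 : 0 < χ) (hχ1 : χ < 1) :
    ∀ (n s : ℕ), 1 ≤ s →
      ((n:ℝ) ^ (1-χ) - (s:ℝ) ^ (1-χ)) / (1-χ) ≤ ∑ l ∈ Finset.Ico s n, (l:ℝ) ^ (-χ) := by
  have hc : (0:ℝ) < 1 - χ := by linarith
  intro n
  induction n with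
  | zero =>
      intro s hs
      simp only [Nat.cast_zero, Finset.Ico_eq_empty (by omega : ¬ (s:ℕ) < 0), Finset.sum_empty]
      apply div_nonpos_of_nonpos_of_nonneg _ hc.le
      rw [Real.zero_rpow (by linarith)]
      simp
      positivity
  | succ n ih =>
      intro s hs
      by_cases h : s ≤ n
      · rw [Finset.sum_Ico_succ_top h]
        have hx : (1:ℝ) ≤ (n:ℝ) := by exact_mod_cast hs.trans h
        have step := step_rpow hχ0 hχ1 hx
        have ihs := ih s hs
        rw [div_le_iff₀ hc] at ihs ⊢
        push_cast
        nlinarith [Real.rpow_nonneg (by positivity : (0:ℝ) ≤ (n:ℝ)) (-χ)]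
      · have h2 : s ≥ n + 1 := by omega
        rw [Finset.Ico_eq_empty (by omega)]
        simp only [Finset.sum_empty]
        apply div_nonpos_of_nonpos_of_nonneg _ hc.le
        have : ((n:ℝ)+1) ^ (1-χ) ≤ (s:ℝ) ^ (1-χ) := by
          apply Real.rpow_le_rpow (by positivity) _ hc.le
          exact_mod_cast h2
        push_cast
        linarith

set_option maxHeartbeats 1000000 in
/-- Equation (54): there is a constant `C > 0` such that for all `1 ≤ r < n`,
`‖∏_{l=r+1}^{n−1} ((1+η_l)I − l^{-χ}A)‖ ≤ C exp(−(λ_min/(2−2χ))(n^{1−χ} − (r+1)^{1−χ}))`,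
where `λ_min > 0` is the smallest eigenvalue of the symmetric positive-definite `A`. -/
theorem stmt_19 (d : ℕ) (hd : 0 < d) (χ θ η' : ℝ) (hχ : χ ∈ Set.Ioo (0 : ℝ) 1)
    (hθ : θ ∈ Set.Ioc χ 1) (hη' : 0 < η')
    (η : ℕ → ℝ) (hη : ∀ l : ℕ, 1 ≤ l → 0 ≤ η l ∧ η l ≤ η' * (l : ℝ) ^ (-θ))
    (A : EuclideanSpace ℝ (Fin d) →L[ℝ] EuclideanSpace ℝ (Fin d))
    (hAsym : ∀ x y : EuclideanSpace ℝ (Fin d), ⟪A x, y⟫ = ⟪x, A y⟫)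
    (lmin : ℝ) (hlmin : 0 < lmin)
    (heig : ∃ x : EuclideanSpace ℝ (Fin d), x ≠ 0 ∧ A x = lmin • x)
    (hmin : ∀ (lam : ℝ) (x : EuclideanSpace ℝ (Fin d)), x ≠ 0 → A x = lam • x → lmin ≤ lam) :
    ∃ C : ℝ, 0 < C ∧ ∀ r n : ℕ, 1 ≤ r → r < n →
      ‖prodDesc (fun l => (1 + η l) • 1 - (l : ℝ) ^ (-χ) • A) (r + 1) (n - 1)‖ ≤
        C * Real.exp (-(lmin / (2 - 2 * χ)) *
          ((n : ℝ) ^ (1 - χ) - ((r : ℝ) + 1) ^ (1 - χ))) := by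
  obtain ⟨hχ0, hχ1⟩ := hχ
  obtain ⟨hθχ, hθ1⟩ := hθ
  haveI : Nonempty (Fin d) := ⟨⟨0, hd⟩⟩
  haveI : Nontrivial (EuclideanSpace ℝ (Fin d)) := inferInstance
  set B : ℕ → EuclideanSpace ℝ (Fin d) →L[ℝ] EuclideanSpace ℝ (Fin d) :=
    fun l => (1 + η l) • 1 - (l : ℝ) ^ (-χ) • A with hBdef
  -- lmin ≤ ‖A‖ and eigenvalue bounds
  have hA0 : (0:ℝ) ≤ ‖A‖ := norm_nonneg A
  have heigbd : ∀ μ : ℝ, (∃ x : EuclideanSpace ℝ (Fin d), x ≠ 0 ∧ A x = μ • x) →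
      lmin ≤ μ ∧ μ ≤ ‖A‖ := by
    rintro μ ⟨v, hv, hveq⟩
    refine ⟨hmin μ v hv hveq, ?_⟩
    have h1 : ‖A v‖ = |μ| * ‖v‖ := by rw [hveq, norm_smul, Real.norm_eq_abs]
    have h2 : ‖A v‖ ≤ ‖A‖ * ‖v‖ := A.le_opNorm v
    have hv0 : 0 < ‖v‖ := norm_pos_iff.mpr hv
    have : |μ| ≤ ‖A‖ := by
      rw [h1] at h2
      exact le_of_mul_le_mul_right h2 hv0
    exact (le_abs_self μ).trans this
  have hlA : lmin ≤ ‖A‖ := (heigbd lmin heig).2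
  -- constants
  set c : ℝ := lmin / 2 with hc
  have hc0 : 0 < c := by positivity
  set M : ℝ := 2 + η' + ‖A‖ with hM
  have hM1 : (1:ℝ) ≤ M := by rw [hM]; linarith
  set K₀ : ℝ := (M + 1) * Real.exp c with hK₀def
  have hK₀1 : (1:ℝ) ≤ K₀ := by
    rw [hK₀def]
    have := Real.one_le_exp hc0.le
    nlinarith
  have hK₀0 : (0:ℝ) < K₀ := lt_of_lt_of_le one_pos hK₀1
  set R1 : ℝ := (2 * η' / lmin) ^ ((θ - χ)⁻¹) with hR1def
  set R2 : ℝ := (‖A‖ + 1) ^ (χ⁻¹) with hR2def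
  obtain ⟨N, hN⟩ := exists_nat_ge (max R1 R2)
  set L₀ : ℕ := N + 1 with hL₀def
  -- the uniform factor bound
  have hfac : ∀ l : ℕ, 1 ≤ l →
      ‖B l‖ ≤ (if l < L₀ then K₀ else 1) * Real.exp (-(c * (l:ℝ) ^ (-χ))) := by
    intro l hl
    have hx1 : (1:ℝ) ≤ (l:ℝ) := by exact_mod_cast hl
    have hx0 : (0:ℝ) < (l:ℝ) := by linarith
    set x : ℝ := (l:ℝ) with hxdef
    have ht0 : (0:ℝ) < x ^ (-χ) := Real.rpow_pos_of_pos hx0 _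
    have ht1 : x ^ (-χ) ≤ 1 := Real.rpow_le_one_of_one_le_of_nonpos hx1 (by linarith)
    have htθ1 : x ^ (-θ) ≤ 1 := Real.rpow_le_one_of_one_le_of_nonpos hx1 (by linarith)
    obtain ⟨hη0, hηle⟩ := hη l hl
    have hηl1 : η l ≤ η' := hηle.trans (by nlinarith)
    have hBeq : B l = (1 + η l) • (1 : EuclideanSpace ℝ (Fin d) →L[ℝ] EuclideanSpace ℝ (Fin d))
        - x ^ (-χ) • A := rfl
    by_cases hlL : l < L₀
    · -- small l: crude bound
      rw [if_pos hlL]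
      have hBl : ‖B l‖ ≤ M := by
        rw [hBeq]
        apply ContinuousLinearMap.opNorm_le_bound _ (by rw [hM]; positivity)
        intro v
        have h5 : ((1 + η l) • (1 : EuclideanSpace ℝ (Fin d) →L[ℝ] EuclideanSpace ℝ (Fin d))
            - x ^ (-χ) • A) v = (1 + η l) • v - x ^ (-χ) • (A v) := by
          simp
        rw [h5]
        have h6 : ‖(1 + η l) • v - x ^ (-χ) • (A v)‖ ≤ ‖(1 + η l) • v‖ + ‖x ^ (-χ) • (A v)‖ :=
          norm_sub_le _ _
        rw [norm_smul, norm_smul, Real.norm_eq_abs, Real.norm_eq_abs] at h6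
        have h1 : |1 + η l| ≤ 1 + η' := by rw [abs_of_nonneg (by linarith)]; linarith
        have h2 : |x ^ (-χ)| ≤ 1 := by rw [abs_of_nonneg ht0.le]; exact ht1
        have h7 : ‖A v‖ ≤ ‖A‖ * ‖v‖ := A.le_opNorm v
        have h8 : (0:ℝ) ≤ ‖v‖ := norm_nonneg v
        have h9 : (0:ℝ) ≤ ‖A v‖ := norm_nonneg _
        rw [hM]
        nlinarith
      have hexp : Real.exp (-c) ≤ Real.exp (-(c * (x ^ (-χ)))) := by
        apply Real.exp_le_exp.mpr
        nlinarith
      have e1 : Real.exp c * Real.exp (-c) = 1 := by rw [← Real.exp_add]; simp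
      have e2 : K₀ * Real.exp (-c) = M + 1 := by rw [hK₀def, mul_assoc, e1, mul_one]
      have e3 : K₀ * Real.exp (-c) ≤ K₀ * Real.exp (-(c * (x ^ (-χ)))) :=
        mul_le_mul_of_nonneg_left hexp hK₀0.le
      linarith
    · -- large l: spectral bound
      rw [if_neg hlL]
      have hlN : (max R1 R2) ≤ x := by
        have hNl : N ≤ l := by omega
        have : (N:ℝ) ≤ x := by rw [hxdef]; exact_mod_cast hNl
        exact hN.trans this
      have hR1x : R1 ≤ x := (le_max_left _ _).trans hlN
      have hR2x : R2 ≤ x := (le_max_right _ _).trans hlN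
      -- (a) ‖A‖ ≤ x^χ
      have hAx : ‖A‖ + 1 ≤ x ^ χ := by
        have h1 : R2 ^ χ ≤ x ^ χ := by
          apply Real.rpow_le_rpow _ hR2x hχ0.le
          rw [hR2def]; positivity
        have h2 : R2 ^ χ = ‖A‖ + 1 := by
          rw [hR2def, ← Real.rpow_mul (by linarith), inv_mul_cancel₀ hχ0.ne', Real.rpow_one]
        linarith
      have hta : x ^ (-χ) * ‖A‖ ≤ 1 := by
        rw [Real.rpow_neg hx0.le]
        rw [inv_mul_le_iff₀ (Real.rpow_pos_of_pos hx0 χ), mul_one]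
        linarith
      -- (b) η l ≤ c * x^(-χ)
      have hηc : η l ≤ c * x ^ (-χ) := by
        have h1 : R1 ^ (θ - χ) ≤ x ^ (θ - χ) := by
          apply Real.rpow_le_rpow _ hR1x (by linarith)
          rw [hR1def]; positivity
        have h2 : R1 ^ (θ - χ) = 2 * η' / lmin := by
          rw [hR1def, ← Real.rpow_mul (by positivity), inv_mul_cancel₀ (by linarith : θ - χ ≠ 0),
            Real.rpow_one]
        have h3 : 2 * η' / lmin ≤ x ^ (θ - χ) := by linarith
        have h4 : η' ≤ c * x ^ (θ - χ) := by
          rw [div_le_iff₀ hlmin] at h3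
          rw [hc]
          nlinarith
        have h5 : η' * x ^ (-θ) ≤ c * x ^ (θ - χ) * x ^ (-θ) := by
          have := Real.rpow_pos_of_pos hx0 (-θ)
          nlinarith
        have h6 : x ^ (θ - χ) * x ^ (-θ) = x ^ (-χ) := by
          rw [← Real.rpow_add hx0]; congr 1; ring
        calc η l ≤ η' * x ^ (-θ) := hηle
          _ ≤ c * x ^ (-χ) := by rw [mul_assoc, h6] at h5; exact h5
      -- spectral bound
      have hKnn : 0 ≤ 1 + η l - x ^ (-χ) * lmin := by nlinarith
      have hspec : ‖B l‖ ≤ 1 + η l - x ^ (-χ) * lmin := by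
        rw [hBeq]
        apply opNorm_comb_le A hAsym (1 + η l) (x ^ (-χ)) _ hKnn
        intro μ hμ
        obtain ⟨hμ1, hμ2⟩ := heigbd μ hμ
        have hμx : x ^ (-χ) * μ ≤ x ^ (-χ) * ‖A‖ := by nlinarith
        rw [abs_of_nonneg (by nlinarith)]
        nlinarith
      have : 1 + η l - x ^ (-χ) * lmin ≤ 1 - c * x ^ (-χ) := by
        rw [hc] at hηc ⊢
        nlinarith
      calc ‖B l‖ ≤ 1 - c * x ^ (-χ) := hspec.trans this
        _ ≤ Real.exp (-(c * x ^ (-χ))) := by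
            have := Real.add_one_le_exp (-(c * x ^ (-χ)))
            linarith
        _ = 1 * Real.exp (-(c * x ^ (-χ))) := (one_mul _).symm
  -- main estimate
  refine ⟨K₀ ^ L₀, pow_pos hK₀0 L₀, ?_⟩
  intro r n hr hrn
  have hne : (1:ℝ) - χ ≠ 0 := by linarith
  set s := Finset.Icc (r+1) (n-1) with hs
  have hs1 : ∀ l ∈ s, 1 ≤ l := by intro l hl; rw [hs, Finset.mem_Icc] at hl; omega
  have step1 : ‖prodDesc B (r+1) (n-1)‖ ≤ ∏ l ∈ s, ‖B l‖ := norm_prodDesc_le hd B _ _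
  have step2 : ∏ l ∈ s, ‖B l‖ ≤
      ∏ l ∈ s, ((if l < L₀ then K₀ else 1) * Real.exp (-(c * (l:ℝ) ^ (-χ)))) := by
    apply Finset.prod_le_prod (fun l _ => norm_nonneg _)
    intro l hl
    exact hfac l (hs1 l hl)
  have step3 : ∏ l ∈ s, ((if l < L₀ then K₀ else 1) * Real.exp (-(c * (l:ℝ) ^ (-χ)))) =
      (∏ l ∈ s, (if l < L₀ then K₀ else 1)) * Real.exp (∑ l ∈ s, -(c * (l:ℝ) ^ (-χ))) := by
    rw [Finset.prod_mul_distrib, Real.exp_sum]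
  have step4 : (∏ l ∈ s, (if l < L₀ then K₀ else 1)) ≤ K₀ ^ L₀ := by
    have h1 : (∏ l ∈ s, (if l < L₀ then K₀ else 1)) = K₀ ^ (s.filter (· < L₀)).card := by
      rw [Finset.prod_ite, Finset.prod_const, Finset.prod_const, one_pow, mul_one]
    rw [h1]
    apply pow_le_pow_right₀ hK₀1
    calc (s.filter (· < L₀)).card ≤ (Finset.range L₀).card := by
          apply Finset.card_le_card
          intro l hl
          rw [Finset.mem_filter] at hl
          rw [Finset.mem_range]
          exact hl.2
      _ = L₀ := Finset.card_range L₀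
  -- the sum bound
  have hIco : s = Finset.Ico (r+1) n := by
    rw [hs, ← Finset.Ico_add_one_right_eq_Icc]
    congr 1
    omega
  have hsum : ((n:ℝ) ^ (1-χ) - ((r:ℝ)+1) ^ (1-χ)) / (1-χ) ≤ ∑ l ∈ s, (l:ℝ) ^ (-χ) := by
    rw [hIco]
    have := sum_rpow_lb hχ0 hχ1 n (r+1) (by omega)
    push_cast at this ⊢
    exact this
  have step5 : ∑ l ∈ s, -(c * (l:ℝ) ^ (-χ)) ≤
      -(lmin / (2 - 2*χ)) * ((n:ℝ) ^ (1-χ) - ((r:ℝ)+1) ^ (1-χ)) := by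
    have h1 : ∑ l ∈ s, -(c * (l:ℝ) ^ (-χ)) = -(c * ∑ l ∈ s, (l:ℝ) ^ (-χ)) := by
      rw [Finset.mul_sum, ← Finset.sum_neg_distrib]
    rw [h1]
    have h2 : c * (((n:ℝ) ^ (1-χ) - ((r:ℝ)+1) ^ (1-χ)) / (1-χ)) ≤
        c * ∑ l ∈ s, (l:ℝ) ^ (-χ) := mul_le_mul_of_nonneg_left hsum hc0.le
    have h3 : c * (((n:ℝ) ^ (1-χ) - ((r:ℝ)+1) ^ (1-χ)) / (1-χ)) =
        (lmin / (2 - 2*χ)) * ((n:ℝ) ^ (1-χ) - ((r:ℝ)+1) ^ (1-χ)) := by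
      have h3' : lmin / (2 - 2*χ) = c / (1 - χ) := by
        rw [hc, div_div]
        congr 1
        ring
      rw [h3']
      ring
    linarith
  calc ‖prodDesc B (r+1) (n-1)‖ ≤ ∏ l ∈ s, ‖B l‖ := step1
    _ ≤ (∏ l ∈ s, (if l < L₀ then K₀ else 1)) * Real.exp (∑ l ∈ s, -(c * (l:ℝ) ^ (-χ))) := by
        rw [← step3]; exact step2
    _ ≤ K₀ ^ L₀ * Real.exp (-(lmin / (2 - 2*χ)) * ((n:ℝ) ^ (1-χ) - ((r:ℝ)+1) ^ (1-χ))) := by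
        apply mul_le_mul step4 (Real.exp_le_exp.mpr step5) (Real.exp_pos _).le
          (by positivity)
end
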